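/- Let C : ℤ → U(2) satisfy the standing Assumption with supp(C−I₂) ≠ ∅, set k = |chs(C−I₂)|_ℤ, and let U = S∘C. Let M = 1_J U 1_J with J = chs(C−I₂), regarded as a linear operator on the (2k)-dimensional space of maps ℤ → ℂ² supported in J. Then the sum of the algebraic multiplicities of all nonzero eigenvalues of M is at most 2(k−1); in particular, the set of λ ∈ ℂ∖{0} for which there exists a nonzero outgoing solution φ of Uφ = λφ is finite with cardinality at most 2(k−1). -/

import Mathlib

noncomputable section

open scoped ComplexConjugate

/-- A state: a map ℤ → ℂ², components `ψ x 0` (left, ψ^L) and `ψ x 1` (right, ψ^R). -/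
abbrev QWState := ℤ → Fin 2 → ℂ

/-- The quantum walk operator U = S∘C acting pointwise:
`(Uψ)(x) = ((C(x+1)ψ(x+1))₁, (C(x−1)ψ(x−1))₂)`. -/
def qwalk (C : ℤ → Matrix (Fin 2) (Fin 2) ℂ) (ψ : QWState) : QWState :=
  fun x => ![(C (x + 1)).mulVec (ψ (x + 1)) 0, (C (x - 1)).mulVec (ψ (x - 1)) 1]

/-- The standing Assumption on the coin. -/
structure CoinAssumption (C : ℤ → Matrix (Fin 2) (Fin 2) ℂ) : Prop where
  unitary : ∀ x, C x ∈ Matrix.unitaryGroup (Fin 2) ℂ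
  d11 : ∀ x, C x 0 0 ≠ 0
  d22 : ∀ x, C x 1 1 ≠ 0
  fin : Set.Finite {x : ℤ | C x ≠ 1}

/-- Outgoing: ψ^L vanishes far right, ψ^R vanishes far left. -/
def Outgoing (ψ : QWState) : Prop :=
  ∃ r : ℤ, 0 < r ∧ ∀ x : ℤ, r < x → ψ x 0 = 0 ∧ ψ (-x) 1 = 0

/-- Extension by zero of a map defined on J ∩ ℤ = [a,b] ∩ ℤ to all of ℤ. -/
def embed (a b : ℤ) (f : ↥(Set.Icc a b) → Fin 2 → ℂ) : QWState :=
  fun x => if hx : x ∈ Set.Icc a b then f ⟨x, hx⟩ else 0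

/-- Auxiliary: the sum of finranks of an independent family of submodules is at most the
finrank of the ambient space. -/
lemma mySum_finrank_le {K V ι : Type*} [Field K] [AddCommGroup V] [Module K V]
    [FiniteDimensional K V] {p : ι → Submodule K V} (hp : iSupIndep p)
    (s : Finset ι) : ∑ i ∈ s, Module.finrank K (p i) ≤ Module.finrank K V := by
  classical
  have H : ∀ s : Finset ι, ∑ i ∈ s, Module.finrank K (p i) ≤ Module.finrank K ↥(s.sup p) := by
    intro s
    induction s using Finset.cons_induction with
    | empty => simp
    | cons a s ha ih =>
      have hd : Disjoint (p a) (s.sup p) := by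
        have := hp.disjoint_biSup (y := ↑s) ha
        refine this.mono_right ?_
        rw [Finset.sup_eq_iSup]
        exact le_rfl
      have heq : Module.finrank K ↥(p a ⊔ s.sup p) =
          Module.finrank K (p a) + Module.finrank K ↥(s.sup p) := by
        have := Submodule.finrank_sup_add_finrank_inf_eq (p a) (s.sup p)
        rw [hd.eq_bot] at this
        simpa using this
      rw [Finset.sum_cons, Finset.sup_cons, heq]
      omega
  exact le_trans (H s) (Submodule.finrank_le _)

/-- Auxiliary: a nonzero outgoing solution of `Uφ = λφ`, `λ ≠ 0`, restricts to an eigenvector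
of `M = 1_J U 1_J`, hence `λ` is an eigenvalue of `M`. -/
lemma myResonance (C : ℤ → Matrix (Fin 2) (Fin 2) ℂ)
    (xm xp : ℤ) (hle : xm ≤ xp)
    (hout : ∀ x : ℤ, xp < x → C x = 1) (hin : ∀ x : ℤ, x < xm → C x = 1)
    (M : Module.End ℂ (↥(Set.Icc xm xp) → Fin 2 → ℂ))
    (hM : ∀ f : ↥(Set.Icc xm xp) → Fin 2 → ℂ, ∀ z : ↥(Set.Icc xm xp),
      M f z = qwalk C (embed xm xp f) (z : ℤ))
    (lam : ℂ) (hlam : lam ≠ 0)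
    (φ : QWState) (hne : ∃ x : ℤ, ∃ i : Fin 2, φ x i ≠ 0) (hog : Outgoing φ)
    (heig : ∀ x : ℤ, ∀ i : Fin 2, qwalk C φ x i = lam * φ x i) :
    M.HasEigenvalue lam := by
  obtain ⟨r, hr, hrz⟩ := hog
  have hL : ∀ x : ℤ, (C (x + 1)).mulVec (φ (x + 1)) 0 = lam * φ x 0 := by
    intro x; simpa [qwalk] using heig x 0
  have hR : ∀ x : ℤ, (C (x - 1)).mulVec (φ (x - 1)) 1 = lam * φ x 1 := by
    intro x; simpa [qwalk] using heig x 1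
  -- recursion in the free region
  have hrec0 : ∀ x : ℤ, xp ≤ x → φ (x + 1) 0 = lam * φ x 0 := by
    intro x hx
    have := hL x
    rwa [hout (x + 1) (by omega), Matrix.one_mulVec] at this
  have hrec1 : ∀ x : ℤ, x ≤ xm → φ (x - 1) 1 = lam * φ x 1 := by
    intro x hx
    have := hR x
    rwa [hin (x - 1) (by omega), Matrix.one_mulVec] at this
  -- (a) left component vanishes right of xp
  have ha : ∀ x : ℤ, xp < x → φ x 0 = 0 := by
    intro x hx
    have key : ∀ n : ℕ, φ (x + n) 0 = lam ^ n * φ x 0 := by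
      intro n
      induction n with
      | zero => simp
      | succ n ih =>
        have h1 : (x + (n + 1 : ℕ) : ℤ) = (x + n) + 1 := by push_cast; ring
        rw [h1, hrec0 (x + n) (by omega), ih]
        ring
    set n : ℕ := (r - x).toNat + 1 with hn
    have hxn : r < x + n := by
      have := Int.self_le_toNat (r - x)
      omega
    have h0 := (hrz (x + n) hxn).1
    rw [key n] at h0
    exact (mul_eq_zero.mp h0).elim (fun h => absurd h (pow_ne_zero n hlam)) id
  -- (b) right component vanishes left of xm
  have hb : ∀ x : ℤ, x < xm → φ x 1 = 0 := by
    intro x hx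
    have key : ∀ n : ℕ, φ (x - n) 1 = lam ^ n * φ x 1 := by
      intro n
      induction n with
      | zero => simp
      | succ n ih =>
        have h1 : (x - (n + 1 : ℕ) : ℤ) = (x - n) - 1 := by push_cast; ring
        rw [h1, hrec1 (x - n) (by omega), ih]
        ring
    set n : ℕ := (x + r).toNat + 1 with hn
    have hxn : r < -(x - n) := by
      have := Int.self_le_toNat (x + r)
      omega
    have h0 := (hrz (-(x - n)) hxn).2
    rw [neg_neg, key n] at h0
    exact (mul_eq_zero.mp h0).elim (fun h => absurd h (pow_ne_zero n hlam)) id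
  -- the candidate eigenvector
  set f : ↥(Set.Icc xm xp) → Fin 2 → ℂ := fun z i => φ (z : ℤ) i with hf
  have hembed : ∀ x : ℤ, x ∈ Set.Icc xm xp → embed xm xp f x = φ x := by
    intro x hx
    simp [embed, hx, hf]
  have hembed' : ∀ x : ℤ, x ∉ Set.Icc xm xp → embed xm xp f x = 0 := by
    intro x hx
    simp [embed, hx]
  have heigf : M f = lam • f := by
    funext z i
    have hz := z.2
    rw [Set.mem_Icc] at hz
    have hMz := congrFun (hM f z) i
    fin_cases i
    · rw [hMz]
      show (qwalk C (embed xm xp f)) (z : ℤ) 0 = lam * φ (z : ℤ) 0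
      by_cases h : (z : ℤ) + 1 ≤ xp
      · have hmem : (z : ℤ) + 1 ∈ Set.Icc xm xp := Set.mem_Icc.mpr ⟨by omega, h⟩
        simp only [qwalk, Matrix.cons_val_zero]
        rw [hembed _ hmem, hL]
      · have hzp : (z : ℤ) = xp := by omega
        simp only [qwalk, Matrix.cons_val_zero]
        rw [hembed' _ (by rw [Set.mem_Icc]; omega), Matrix.mulVec_zero]
        have h2 : lam * φ (z : ℤ) 0 = 0 := by
          rw [← hL]
          rw [hout ((z:ℤ) + 1) (by omega), Matrix.one_mulVec, ha ((z:ℤ)+1) (by omega)]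
        rw [h2]; rfl
    · rw [hMz]
      show (qwalk C (embed xm xp f)) (z : ℤ) 1 = lam * φ (z : ℤ) 1
      by_cases h : xm ≤ (z : ℤ) - 1
      · have hmem : (z : ℤ) - 1 ∈ Set.Icc xm xp := Set.mem_Icc.mpr ⟨h, by omega⟩
        simp only [qwalk, Matrix.cons_val_one, Matrix.head_cons, Matrix.cons_val_zero]
        rw [hembed _ hmem, hR]
      · simp only [qwalk, Matrix.cons_val_one, Matrix.head_cons]
        rw [hembed' _ (by rw [Set.mem_Icc]; omega), Matrix.mulVec_zero]
        have h2 : lam * φ (z : ℤ) 1 = 0 := by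
          rw [← hR]
          rw [hin ((z:ℤ) - 1) (by omega), Matrix.one_mulVec, hb ((z:ℤ)-1) (by omega)]
        rw [h2]; rfl
  have hf0 : f ≠ 0 := by
    intro hzero
    have hIcc : ∀ x : ℤ, x ∈ Set.Icc xm xp → ∀ i : Fin 2, φ x i = 0 := by
      intro x hx i
      have := congrFun (congrFun hzero ⟨x, hx⟩) i
      simpa [hf] using this
    have hvec : ∀ x : ℤ, x ∈ Set.Icc xm xp → φ x = 0 := by
      intro x hx; funext i; exact hIcc x hx i
    -- right tail, component 1
    have hrtn : ∀ n : ℕ, φ (xp + 1 + n) 1 = 0 := by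
      intro n
      induction n with
      | zero =>
        have := hR (xp + 1)
        rw [add_sub_cancel_right, hvec xp (Set.mem_Icc.mpr ⟨hle, le_rfl⟩),
          Matrix.mulVec_zero] at this
        have := (mul_eq_zero.mp this.symm).elim (fun h => absurd h hlam) id
        simpa using this
      | succ n ih =>
        have := hR (xp + 1 + (n + 1 : ℕ))
        have harg : (xp + 1 + (n + 1 : ℕ) - 1 : ℤ) = xp + 1 + n := by push_cast; ring
        rw [harg, hout (xp + 1 + n) (by omega), Matrix.one_mulVec, ih] at this
        exact (mul_eq_zero.mp this.symm).elim (fun h => absurd h hlam) id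
    have hrt : ∀ x : ℤ, xp + 1 ≤ x → φ x 1 = 0 := by
      intro x hx
      have : x = xp + 1 + (x - xp - 1).toNat := by
        have := Int.toNat_of_nonneg (a := x - xp - 1) (by omega)
        omega
      rw [this]
      exact hrtn _
    -- left tail, component 0
    have hlt : ∀ n : ℕ, φ (xm - 1 - n) 0 = 0 := by
      intro n
      induction n with
      | zero =>
        have := hL (xm - 1)
        rw [sub_add_cancel, hvec xm (Set.mem_Icc.mpr ⟨le_rfl, hle⟩),
          Matrix.mulVec_zero] at this
        have := (mul_eq_zero.mp this.symm).elim (fun h => absurd h hlam) id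
        simpa using this
      | succ n ih =>
        have := hL (xm - 1 - (n + 1 : ℕ))
        have harg : (xm - 1 - (n + 1 : ℕ) + 1 : ℤ) = xm - 1 - n := by push_cast; ring
        rw [harg, hin (xm - 1 - n) (by omega), Matrix.one_mulVec, ih] at this
        exact (mul_eq_zero.mp this.symm).elim (fun h => absurd h hlam) id
    have hlt' : ∀ x : ℤ, x < xm → φ x 0 = 0 := by
      intro x hx
      have : x = xm - 1 - (xm - 1 - x).toNat := by
        have := Int.toNat_of_nonneg (a := xm - 1 - x) (by omega)
        omega
      rw [this]
      exact hlt _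
    obtain ⟨x, i, hxi⟩ := hne
    apply hxi
    by_cases hx : x ∈ Set.Icc xm xp
    · exact hIcc x hx i
    · rw [Set.mem_Icc] at hx
      fin_cases i
      · by_cases h : x < xm
        · exact hlt' x h
        · exact ha x (by omega)
      · by_cases h : x < xm
        · exact hb x h
        · exact hrt x (by omega)
  exact Module.End.hasEigenvalue_of_hasEigenvector
    ⟨Module.End.mem_eigenspace_iff.mpr heigf, hf0⟩

/-- Bound on the number of nonzero resonances: with chs(C−I₂) = [xm, xp] and
k = xp − xm + 1, the sum of the algebraic multiplicities of all nonzero eigenvalues of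
M = 1_J U 1_J (J = chs(C−I₂)) is at most 2(k−1); in particular the set of nonzero
resonances has at most 2(k−1) elements. -/
theorem sum_of_multiplicities_le
    (C : ℤ → Matrix (Fin 2) (Fin 2) ℂ) (hC : CoinAssumption C)
    (xm xp : ℤ) (hxm : C xm ≠ 1) (hxp : C xp ≠ 1)
    (hsupp : ∀ x : ℤ, C x ≠ 1 → xm ≤ x ∧ x ≤ xp)
    (M : Module.End ℂ (↥(Set.Icc xm xp) → Fin 2 → ℂ))
    (hM : ∀ f : ↥(Set.Icc xm xp) → Fin 2 → ℂ, ∀ z : ↥(Set.Icc xm xp),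
      M f z = qwalk C (embed xm xp f) (z : ℤ)) :
    (∀ s : Finset ℂ, (∀ lam ∈ s, lam ≠ 0 ∧ M.HasEigenvalue lam) →
        ((∑ lam ∈ s, Module.finrank ℂ ↥(M.maxGenEigenspace lam) : ℕ) : ℤ)
          ≤ 2 * (xp - xm)) ∧
      (∀ s : Finset ℂ, (∀ lam ∈ s, lam ≠ 0 ∧
          ∃ φ : QWState, (∃ x : ℤ, ∃ i : Fin 2, φ x i ≠ 0) ∧ Outgoing φ ∧
            (∀ x : ℤ, ∀ i : Fin 2, qwalk C φ x i = lam * φ x i)) →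
        ((s.card : ℕ) : ℤ) ≤ 2 * (xp - xm)) := by
  classical
  have hle : xm ≤ xp := (hsupp xm hxm).2
  have hout : ∀ x : ℤ, xp < x → C x = 1 := by
    intro x hx
    by_contra h
    have := (hsupp x h).2
    omega
  have hin : ∀ x : ℤ, x < xm → C x = 1 := by
    intro x hx
    by_contra h
    have := (hsupp x h).1
    omega
  -- dimension of the ambient space
  have hdim : Module.finrank ℂ (↥(Set.Icc xm xp) → Fin 2 → ℂ)
      = Fintype.card ↥(Set.Icc xm xp) * 2 := by
    rw [Module.finrank_pi_fintype]
    simp [Module.finrank_pi]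
  have hcard : (Fintype.card ↥(Set.Icc xm xp) : ℤ) = xp + 1 - xm := by
    have := Int.card_fintype_Icc_of_le (a := xm) (b := xp) (by omega)
    omega
  -- the two boundary points
  have hzpmem : xp ∈ Set.Icc xm xp := Set.mem_Icc.mpr ⟨hle, le_rfl⟩
  have hzmmem : xm ∈ Set.Icc xm xp := Set.mem_Icc.mpr ⟨le_rfl, hle⟩
  set zp : ↥(Set.Icc xm xp) := ⟨xp, hzpmem⟩ with hzp
  set zm : ↥(Set.Icc xm xp) := ⟨xm, hzmmem⟩ with hzm
  -- evaluation map at the two boundary components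
  set E : (↥(Set.Icc xm xp) → Fin 2 → ℂ) →ₗ[ℂ] ℂ × ℂ :=
    { toFun := fun f => (f zp 0, f zm 1)
      map_add' := fun f g => rfl
      map_smul' := fun c f => rfl } with hE
  have hEsurj : Function.Surjective E := by
    intro c
    refine ⟨fun z i => if z = zp ∧ i = 0 then c.1 else if z = zm ∧ i = 1 then c.2 else 0, ?_⟩
    have h1 : (1 : Fin 2) ≠ 0 := by decide
    simp only [hE, LinearMap.coe_mk, AddHom.coe_mk]
    refine Prod.ext ?_ ?_
    · simp
    · simp [h1]
  have hErange : LinearMap.range E = ⊤ := LinearMap.range_eq_top.mpr hEsurj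
  -- range of M is contained in ker E
  have hrangeM : LinearMap.range M ≤ LinearMap.ker E := by
    rintro _ ⟨f, rfl⟩
    rw [LinearMap.mem_ker]
    have h1 : M f zp 0 = 0 := by
      rw [hM f zp]
      show (qwalk C (embed xm xp f)) ((zp : ℤ)) 0 = 0
      simp only [qwalk, Matrix.cons_val_zero]
      have : embed xm xp f ((zp : ℤ) + 1) = 0 := by
        simp only [embed]
        rw [dif_neg]
        rw [Set.mem_Icc]
        have : (zp : ℤ) = xp := rfl
        omega
      rw [this, Matrix.mulVec_zero]
      rfl
    have h2 : M f zm 1 = 0 := by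
      rw [hM f zm]
      show (qwalk C (embed xm xp f)) ((zm : ℤ)) 1 = 0
      simp only [qwalk, Matrix.cons_val_one, Matrix.head_cons]
      have : embed xm xp f ((zm : ℤ) - 1) = 0 := by
        simp only [embed]
        rw [dif_neg]
        rw [Set.mem_Icc]
        have : (zm : ℤ) = xm := rfl
        omega
      rw [this, Matrix.mulVec_zero]
      rfl
    show E (M f) = 0
    simp only [hE, LinearMap.coe_mk, AddHom.coe_mk]
    rw [h1, h2]
    rfl
  -- finrank of ker E
  have hkerE := LinearMap.finrank_range_add_finrank_ker E
  rw [hErange] at hkerE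
  have htop : Module.finrank ℂ (↥(⊤ : Submodule ℂ (ℂ × ℂ))) = 2 := by
    rw [finrank_top]
    simp [Module.finrank_prod]
  rw [htop] at hkerE
  -- kernel of M has dimension at least 2
  have hkerM := LinearMap.finrank_range_add_finrank_ker (M : (↥(Set.Icc xm xp) → Fin 2 → ℂ) →ₗ[ℂ] _)
  have hrle : Module.finrank ℂ ↥(LinearMap.range M) ≤ Module.finrank ℂ ↥(LinearMap.ker E) :=
    Submodule.finrank_mono hrangeM
  have hker2 : 2 ≤ Module.finrank ℂ ↥(LinearMap.ker M) := by omega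
  -- ker M is contained in the generalized 0-eigenspace
  have hker0 : LinearMap.ker M ≤ M.maxGenEigenspace 0 := by
    intro v hv
    rw [LinearMap.mem_ker] at hv
    rw [Module.End.mem_maxGenEigenspace]
    exact ⟨1, by simp [hv]⟩
  have hmax0 : 2 ≤ Module.finrank ℂ ↥(M.maxGenEigenspace 0) :=
    le_trans hker2 (Submodule.finrank_mono hker0)
  -- Part 1
  have part1 : ∀ s : Finset ℂ, (∀ lam ∈ s, lam ≠ 0) →
      ((∑ lam ∈ s, Module.finrank ℂ ↥(M.maxGenEigenspace lam) : ℕ) : ℤ)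
        ≤ 2 * (xp - xm) := by
    intro s hs
    have h0s : (0 : ℂ) ∉ s := fun h => (hs 0 h) rfl
    have hsum := mySum_finrank_le (Module.End.independent_maxGenEigenspace M) (insert 0 s)
    rw [Finset.sum_insert h0s] at hsum
    have hVdim : (Module.finrank ℂ (↥(Set.Icc xm xp) → Fin 2 → ℂ) : ℤ)
        = 2 * (xp - xm) + 2 := by
      rw [hdim]
      push_cast
      rw [hcard]
      ring
    have h2 : (∑ lam ∈ s, Module.finrank ℂ ↥(M.maxGenEigenspace lam)) + 2
        ≤ Module.finrank ℂ (↥(Set.Icc xm xp) → Fin 2 → ℂ) := by omega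
    have h3 := (Nat.cast_le (α := ℤ)).mpr h2
    push_cast at h3 ⊢
    omega
  refine ⟨fun s hs => part1 s (fun lam hl => (hs lam hl).1), ?_⟩
  -- Part 2
  intro s hs
  have hev : ∀ lam ∈ s, 1 ≤ Module.finrank ℂ ↥(M.maxGenEigenspace lam) := by
    intro lam hl
    obtain ⟨hlam, φ, hne, hog, heig⟩ := hs lam hl
    have heval : M.HasEigenvalue lam :=
      myResonance C xm xp hle hout hin M hM lam hlam φ hne hog heig
    obtain ⟨v, hv⟩ := heval.exists_hasEigenvector
    have hvmem : v ∈ M.maxGenEigenspace lam :=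
      (M.genEigenspace lam).monotone le_top hv.1
    have : Nontrivial ↥(M.maxGenEigenspace lam) :=
      nontrivial_of_ne ⟨v, hvmem⟩ 0 (by simpa [Subtype.ext_iff] using hv.2)
    have := Module.finrank_pos (R := ℂ) (M := ↥(M.maxGenEigenspace lam))
    omega
  have hcards : s.card ≤ ∑ lam ∈ s, Module.finrank ℂ ↥(M.maxGenEigenspace lam) := by
    calc s.card = ∑ _lam ∈ s, 1 := by simp
    _ ≤ _ := Finset.sum_le_sum hev
  have hb := part1 s (fun lam hl => (hs lam hl).1)
  have hc2 := (Nat.cast_le (α := ℤ)).mpr hcards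
  push_cast at hc2 hb ⊢
  omega
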